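/- Let P, I be n×n matrices with entries in ℝ ∪ {-∞} such that P_{jj} ≠ -∞ for every index j, and let S = S({p}, {i}, ⌊n/2⌋). Then G(P ⊕ I) ∈ Γ (equivalently, the multi-precedence graph G(P, I) contains no circuit with positive weight) if and only if G(μ({p} · S^*)) ∈ Γ and G(μ({i} · S^*)) ∈ Γ. -/

import Mathlib

open scoped Classical

namespace NCP

/-- Square max-plus matrices over the extended reals. -/
abbrev MPMat (n : ℕ) := Fin n → Fin n → EReal

/-- Max-plus matrix product: `(A ⊗ B) i j = ⨆ k, A i k + B k j`. -/
noncomputable def mpMul {n : ℕ} (A B : MPMat n) : MPMat n :=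
  fun i j => ⨆ k : Fin n, A i k + B k j

/-- Max-plus identity matrix `E_⊗`. -/
noncomputable def mpId {n : ℕ} : MPMat n :=
  fun i j => if i = j then 0 else ⊥

/-- Max-plus matrix powers. -/
noncomputable def mpPow {n : ℕ} (A : MPMat n) : ℕ → MPMat n
  | 0 => mpId
  | k + 1 => mpMul A (mpPow A k)

/-- Entrywise Kleene star `(A^*) i j = ⨆ k, (A^k) i j`. -/
noncomputable def mpStar {n : ℕ} (A : MPMat n) : MPMat n :=
  fun i j => ⨆ k : ℕ, mpPow A k i j

/-- Entrywise max of two matrices, `A ⊕ B`. -/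
noncomputable def mpAdd {n : ℕ} (A B : MPMat n) : MPMat n :=
  fun i j => max (A i j) (B i j)

/-- `G(A) ∈ Γ`: all diagonal entries of all positive powers are ≤ 0. -/
def InGamma {n : ℕ} (A : MPMat n) : Prop :=
  ∀ i : Fin n, ∀ k : ℕ, 1 ≤ k → mpPow A k i i ≤ 0

/-- `λA`: the matrix with entries `λ + A i j`. -/
noncomputable def sm {n : ℕ} (lam : ℝ) (A : MPMat n) : MPMat n :=
  fun i j => (lam : EReal) + A i j

/-- Division of an extended real by a natural number (±∞ map to ±∞). -/
noncomputable def edivNat (x : EReal) (k : ℕ) : EReal :=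
  if x = ⊤ then ⊤ else if x = ⊥ then ⊥ else ((x.toReal / k : ℝ) : EReal)

/-- The maximum circuit mean of a max-plus matrix. -/
noncomputable def mcm {n : ℕ} (M : MPMat n) : EReal :=
  ⨆ k ∈ Finset.Icc 1 n, ⨆ i : Fin n, edivNat (mpPow M k i i) k

/-- Morphism from words to max-plus matrices determined by `f` on letters. -/
noncomputable def wordMat {α : Type*} {n : ℕ} (f : α → MPMat n) : List α → MPMat n
  | [] => mpId
  | z :: s => mpMul (f z) (wordMat f s)

/-- Entrywise extension of `wordMat` to languages: `μ(L) i j = ⨆ s ∈ L, μ(s) i j`. -/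
noncomputable def langMat {α : Type*} {n : ℕ} (f : α → MPMat n) (L : Language α) : MPMat n :=
  fun i j => ⨆ s ∈ L, wordMat f s i j

/-- The recursive sequence of languages `S(L₁, L₂, k)`. -/
def SL {α : Type*} (L1 L2 : Language α) : ℕ → Language α
  | 0 => 1
  | k + 1 => L1 * SL L1 L2 k * SL L1 L2 k * L2 + L2 * SL L1 L2 k * SL L1 L2 k * L1 + 1


/-- The morphism on the two-letter alphabet `{p, i}` (encoded as `{true, false}`)
sending `p` to `P` and `i` to `I`. -/
noncomputable def mu2 {n : ℕ} (P I : MPMat n) : Bool → MPMat n :=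
  fun z => if z then P else I


section Aux
-- EReal aux

lemma ecancel (r : ℝ) (y : EReal) : ((-r : ℝ) : EReal) + ((r : EReal) + y) = y := by
  induction y using EReal.rec with
  | bot => simp [EReal.add_bot]
  | top => rw [EReal.coe_add_top, EReal.coe_add_top]
  | coe x => rw [← EReal.coe_add, ← EReal.coe_add]; norm_num

lemma eadd_iSup {ι : Sort*} (x : EReal) (f : ι → EReal) :
    x + ⨆ i, f i = ⨆ i, x + f i := by
  refine le_antisymm ?_ (iSup_le fun i => add_le_add_right (le_iSup f i) x)
  induction x using EReal.rec with
  | bot => simp [EReal.bot_add]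
  | top =>
    by_cases h : ∀ i, f i = ⊥
    · have : (⨆ i, f i) = ⊥ := iSup_eq_bot.2 h
      rw [this, EReal.add_bot]; exact bot_le
    · push_neg at h
      obtain ⟨i, hi⟩ := h
      have : (⊤ : EReal) + f i = ⊤ := EReal.top_add_of_ne_bot hi
      calc (⊤:EReal) + ⨆ i, f i ≤ ⊤ := le_top
        _ = ⊤ + f i := this.symm
        _ ≤ ⨆ i, (⊤:EReal) + f i := le_iSup (fun i => (⊤:EReal) + f i) i
  | coe x =>
    have h1 : (⨆ i, f i) ≤ ((-x:ℝ) : EReal) + ⨆ i, (x:EReal) + f i := by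
      refine iSup_le fun i => ?_
      calc f i = ((-x:ℝ):EReal) + ((x:EReal) + f i) := (ecancel x (f i)).symm
        _ ≤ ((-x:ℝ):EReal) + ⨆ i, (x:EReal) + f i :=
          add_le_add_right (le_iSup (fun i => (x:EReal) + f i) i) _
    calc (x:EReal) + ⨆ i, f i ≤ (x:EReal) + (((-x:ℝ):EReal) + ⨆ i, (x:EReal) + f i) :=
          add_le_add_right h1 _
      _ = ⨆ i, (x:EReal) + f i := by
          rw [show ((x:ℝ):EReal) = ((-(-x):ℝ):EReal) by norm_num, ecancel (-x)]

lemma eiSup_add {ι : Sort*} (x : EReal) (f : ι → EReal) :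
    (⨆ i, f i) + x = ⨆ i, f i + x := by
  rw [add_comm, eadd_iSup]; simp [add_comm]


lemma mpMul_id_left {n : ℕ} (A : MPMat n) : mpMul mpId A = A := by
  funext i j
  refine le_antisymm (iSup_le fun k => ?_) ?_
  · by_cases h : i = k
    · subst h; simp [mpId]
    · simp [mpId, h, EReal.bot_add]
  · calc A i j = mpId i i + A i j := by simp [mpId]
      _ ≤ ⨆ k, mpId i k + A k j := le_iSup (fun k => mpId i k + A k j) i

lemma mpMul_id_right {n : ℕ} (A : MPMat n) : mpMul A mpId = A := by
  funext i j
  refine le_antisymm (iSup_le fun k => ?_) ?_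
  · by_cases h : k = j
    · subst h; simp [mpId]
    · simp [mpId, h, EReal.add_bot]
  · calc A i j = A i j + mpId j j := by simp [mpId]
      _ ≤ ⨆ k, A i k + mpId k j := le_iSup (fun k => A i k + mpId k j) j

lemma mpMul_assoc {n : ℕ} (A B C : MPMat n) :
    mpMul (mpMul A B) C = mpMul A (mpMul B C) := by
  funext i j
  show (⨆ k, (⨆ l, A i l + B l k) + C k j) = ⨆ l, A i l + ⨆ k, B l k + C k j
  calc (⨆ k, (⨆ l, A i l + B l k) + C k j)
      = ⨆ k, ⨆ l, (A i l + B l k) + C k j := by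
        refine iSup_congr fun k => ?_; rw [eiSup_add]
    _ = ⨆ l, ⨆ k, A i l + (B l k + C k j) := by
        rw [iSup_comm]; exact iSup_congr fun l => iSup_congr fun k => add_assoc _ _ _
    _ = ⨆ l, A i l + ⨆ k, B l k + C k j := by
        refine iSup_congr fun l => ?_; rw [eadd_iSup]

lemma mpMul_mono {n : ℕ} {A A' B B' : MPMat n} (hA : ∀ i j, A i j ≤ A' i j)
    (hB : ∀ i j, B i j ≤ B' i j) : ∀ i j, mpMul A B i j ≤ mpMul A' B' i j := by
  intro i j
  refine iSup_le fun k => ?_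
  exact le_trans (add_le_add (hA i k) (hB k j)) (le_iSup (fun k => A' i k + B' k j) k)

lemma wordMat_append {α : Type*} {n : ℕ} (f : α → MPMat n) (s t : List α) :
    wordMat f (s ++ t) = mpMul (wordMat f s) (wordMat f t) := by
  induction s with
  | nil => simp [wordMat, mpMul_id_left]
  | cons z s ih =>
      show mpMul (f z) (wordMat f (s ++ t)) = mpMul (mpMul (f z) (wordMat f s)) (wordMat f t)
      rw [ih, mpMul_assoc]


-- langMat lemmas
lemma wordMat_le_langMat {α : Type*} {n : ℕ} (f : α → MPMat n) {L : Language α} {s : List α}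
    (hs : s ∈ L) (i j : Fin n) : wordMat f s i j ≤ langMat f L i j :=
  le_iSup_of_le s (le_iSup_of_le hs le_rfl)

lemma langMat_mul_le {α : Type*} {n : ℕ} (f : α → MPMat n) (L1 L2 : Language α) (i j : Fin n) :
    langMat f (L1 * L2) i j ≤ mpMul (langMat f L1) (langMat f L2) i j := by
  refine iSup_le fun u => iSup_le fun hu => ?_
  obtain ⟨a, ha, b, hb, rfl⟩ := Language.mem_mul.1 hu
  rw [wordMat_append]
  refine iSup_le fun k => ?_
  exact le_trans (add_le_add (wordMat_le_langMat f ha i k) (wordMat_le_langMat f hb k j))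
    (le_iSup (fun k => langMat f L1 i k + langMat f L2 k j) k)

lemma mpMul_langMat_le {α : Type*} {n : ℕ} (f : α → MPMat n) (L1 L2 : Language α) (i j : Fin n) :
    mpMul (langMat f L1) (langMat f L2) i j ≤ langMat f (L1 * L2) i j := by
  refine iSup_le fun k => ?_
  show (⨆ s, ⨆ _ : s ∈ L1, wordMat f s i k) + langMat f L2 k j ≤ _
  rw [eiSup_add]
  refine iSup_le fun s => ?_
  rw [eiSup_add]
  refine iSup_le fun hs => ?_
  show wordMat f s i k + (⨆ t, ⨆ _ : t ∈ L2, wordMat f t k j) ≤ _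
  rw [eadd_iSup]
  refine iSup_le fun t => ?_
  rw [eadd_iSup]
  refine iSup_le fun ht => ?_
  calc wordMat f s i k + wordMat f t k j
      ≤ ⨆ k, wordMat f s i k + wordMat f t k j :=
        le_iSup (fun k => wordMat f s i k + wordMat f t k j) k
    _ = wordMat f (s ++ t) i j := by rw [wordMat_append]; rfl
    _ ≤ _ := wordMat_le_langMat f (Language.append_mem_mul hs ht) i j

lemma langMat_one {α : Type*} {n : ℕ} (f : α → MPMat n) : langMat f (1 : Language α) = mpId := by
  funext i j
  refine le_antisymm (iSup_le fun s => iSup_le fun hs => ?_) ?_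
  · rw [Language.mem_one] at hs; subst hs; exact le_rfl
  · exact wordMat_le_langMat f (Language.nil_mem_one) i j

lemma mpPow_langMat_le {α : Type*} {n : ℕ} (f : α → MPMat n) (L : Language α) (m : ℕ)
    (i j : Fin n) : mpPow (langMat f L) m i j ≤ langMat f (L ^ m) i j := by
  induction m generalizing i j with
  | zero => rw [pow_zero, langMat_one]; exact le_rfl
  | succ m ih =>
    show mpMul (langMat f L) (mpPow (langMat f L) m) i j ≤ _
    rw [pow_succ']
    refine le_trans (mpMul_mono (fun _ _ => le_rfl) ih i j) (mpMul_langMat_le f L (L^m) i j)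

lemma le_mpPow_langMat {α : Type*} {n : ℕ} (f : α → MPMat n) (L : Language α) (m : ℕ)
    (i j : Fin n) : langMat f (L ^ m) i j ≤ mpPow (langMat f L) m i j := by
  induction m generalizing i j with
  | zero => rw [pow_zero, langMat_one]; exact le_rfl
  | succ m ih =>
    show _ ≤ mpMul (langMat f L) (mpPow (langMat f L) m) i j
    rw [pow_succ']
    exact le_trans (langMat_mul_le f L (L^m) i j) (mpMul_mono (fun _ _ => le_rfl) ih i j)

lemma mu2_le_mpAdd {n : ℕ} (P I : MPMat n) (b : Bool) (i j : Fin n) :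
    mu2 P I b i j ≤ mpAdd P I i j := by
  cases b
  · exact le_max_right _ _
  · exact le_max_left _ _

lemma wordMat_le_mpPow {n : ℕ} (P I : MPMat n) (u : List Bool) (i j : Fin n) :
    wordMat (mu2 P I) u i j ≤ mpPow (mpAdd P I) u.length i j := by
  induction u generalizing i j with
  | nil => exact le_rfl
  | cons b t ih =>
    exact mpMul_mono (mu2_le_mpAdd P I b) (fun i j => ih i j) i j

lemma pow_words_ne_nil {α : Type*} {L : Language α} (hL : ∀ u ∈ L, u ≠ ([] : List α))
    {m : ℕ} (hm : 1 ≤ m) {u : List α} (hu : u ∈ L ^ m) : u ≠ [] := by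
  induction m with
  | zero => omega
  | succ m ih =>
    rw [pow_succ, Language.mem_mul] at hu
    obtain ⟨a, ha, b, hb, rfl⟩ := hu
    have hb' := hL b hb
    simp [hb']

lemma forward_gamma {n : ℕ} (P I : MPMat n) (h : InGamma (mpAdd P I)) (L : Language Bool)
    (hL : ∀ u ∈ L, u ≠ ([] : List Bool)) : InGamma (langMat (mu2 P I) L) := by
  intro i m hm
  refine le_trans (mpPow_langMat_le _ L m i i) ?_
  refine iSup_le fun u => iSup_le fun hu => ?_
  have hne : u ≠ [] := pow_words_ne_nil hL hm hu
  have hlen : 1 ≤ u.length := List.length_pos_iff.2 hne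
  exact le_trans (wordMat_le_mpPow P I u i i) (h i u.length hlen)

-- path machinery
noncomputable def pw {n : ℕ} (f : Bool → MPMat n) : Fin n → List (Bool × Fin n) → EReal
  | _, [] => 0
  | j, (b, v) :: t => f b j v + pw f v t

def dst {n : ℕ} : Fin n → List (Bool × Fin n) → Fin n
  | j, [] => j
  | _, (_, v) :: t => dst v t

lemma dst_append {n : ℕ} (i : Fin n) (l1 l2 : List (Bool × Fin n)) :
    dst i (l1 ++ l2) = dst (dst i l1) l2 := by
  induction l1 generalizing i with
  | nil => rfl
  | cons a t ih => obtain ⟨b, v⟩ := a; exact ih v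

lemma pw_append {n : ℕ} (f : Bool → MPMat n) (i : Fin n) (l1 l2 : List (Bool × Fin n)) :
    pw f i (l1 ++ l2) = pw f i l1 + pw f (dst i l1) l2 := by
  induction l1 generalizing i with
  | nil => show pw f i l2 = 0 + _; rw [zero_add]; rfl
  | cons a t ih =>
    obtain ⟨b, v⟩ := a
    show f b i v + pw f v (t ++ l2) = (f b i v + pw f v t) + _
    rw [ih v, add_assoc]; rfl

lemma pw_le_wordMat {n : ℕ} (f : Bool → MPMat n) (l : List (Bool × Fin n)) (i : Fin n) :
    pw f i l ≤ wordMat f (l.map Prod.fst) i (dst i l) := by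
  induction l generalizing i with
  | nil => simp [pw, wordMat, mpId, dst]
  | cons a t ih =>
    obtain ⟨b, v⟩ := a
    show f b i v + pw f v t ≤ mpMul (f b) (wordMat f (t.map Prod.fst)) i (dst v t)
    calc f b i v + pw f v t ≤ f b i v + wordMat f (t.map Prod.fst) v (dst v t) :=
          add_le_add_right (ih v) _
      _ ≤ ⨆ k, f b i k + wordMat f (t.map Prod.fst) k (dst v t) :=
          le_iSup (fun k => f b i k + wordMat f (t.map Prod.fst) k (dst v t)) v

lemma fin_iSup_attained {n : ℕ} [NeZero n] (g : Fin n → EReal) : ∃ v, (⨆ k, g k) = g v := by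
  obtain ⟨v, hv⟩ := Finite.exists_max g
  exact ⟨v, le_antisymm (iSup_le hv) (le_iSup g v)⟩

lemma mpPow_attained {n : ℕ} (P I : MPMat n) (k : ℕ) (i j : Fin n) :
    mpPow (mpAdd P I) k i j = ⊥ ∨
      ∃ l : List (Bool × Fin n), l.length = k ∧ dst i l = j ∧
        mpPow (mpAdd P I) k i j ≤ pw (mu2 P I) i l := by
  induction k generalizing i j with
  | zero =>
    by_cases h : i = j
    · subst h; right; exact ⟨[], rfl, rfl, by simp [mpPow, mpId, pw]⟩
    · left; simp [mpPow, mpId, h]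
  | succ k ih =>
    have : NeZero n := ⟨fun h => (h ▸ i).elim0⟩
    obtain ⟨v, hv⟩ := fin_iSup_attained (fun v => mpAdd P I i v + mpPow (mpAdd P I) k v j)
    have hb : ∃ b : Bool, mpAdd P I i v = mu2 P I b i v := by
      rcases le_total (P i v) (I i v) with h | h
      · exact ⟨false, max_eq_right h⟩
      · exact ⟨true, max_eq_left h⟩
    obtain ⟨b, hbv⟩ := hb
    have hpow : mpPow (mpAdd P I) (k+1) i j
        = mpAdd P I i v + mpPow (mpAdd P I) k v j := hv
    rcases ih v j with hbot | ⟨l, hlen, hdst, hle⟩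
    · left; rw [hpow, hbot, EReal.add_bot]
    · right
      refine ⟨(b, v) :: l, by simp [hlen], hdst, ?_⟩
      show _ ≤ mu2 P I b i v + pw (mu2 P I) v l
      rw [hpow, hbv]
      exact add_le_add_right hle _

lemma pw_ne_top {n : ℕ} (f : Bool → MPMat n) (hf : ∀ b u v, f b u v ≠ ⊤)
    (i : Fin n) (l : List (Bool × Fin n)) : pw f i l ≠ ⊤ := by
  induction l generalizing i with
  | nil => exact fun h => by simp [pw] at h
  | cons a t ih =>
    obtain ⟨b, v⟩ := a
    show f b i v + pw f v t ≠ ⊤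
    exact (EReal.add_lt_top (hf b i v) (ih v)).ne

-- circuit elimination
lemma no_pos_circuit {n : ℕ} (f : Bool → MPMat n)
    (hshort : ∀ (j : Fin n) (l : List (Bool × Fin n)), 1 ≤ l.length → l.length ≤ n →
      dst j l = j → ¬ (0 < pw f j l)) :
    ∀ (k : ℕ) (l : List (Bool × Fin n)) (j : Fin n), l.length = k → 1 ≤ k →
      dst j l = j → ¬ (0 < pw f j l) := by
  intro k
  induction k using Nat.strong_induction_on with
  | _ k ih =>
  intro l j hlen hk hdst hpos
  by_cases hkn : k ≤ n
  · exact hshort j l (hlen ▸ hk) (hlen ▸ hkn) hdst hpos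
  push_neg at hkn
  have hcard : Fintype.card (Fin n) < Fintype.card (Fin k) := by simp [hkn]
  obtain ⟨a, b, hab, heq⟩ :=
    Fintype.exists_ne_map_eq_of_card_lt (fun t : Fin k => dst j (l.take t.val)) hcard
  have key : ∃ t1 t2 : ℕ, t1 < t2 ∧ t2 < k ∧ dst j (l.take t1) = dst j (l.take t2) := by
    rcases Nat.lt_or_ge a.val b.val with h | h
    · exact ⟨a.val, b.val, h, b.isLt, heq⟩
    · have h2 : b.val < a.val := by
        rcases Nat.lt_or_ge b.val a.val with h' | h'
        · exact h'
        · exact absurd (Fin.ext (Nat.le_antisymm h' h)) hab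
      exact ⟨b.val, a.val, h2, a.isLt, heq.symm⟩
  obtain ⟨t1, t2, h12, h2k, hvv⟩ := key
  set A := l.take t1 with hA
  set B := (l.drop t1).take (t2 - t1) with hB
  set C := (l.drop t1).drop (t2 - t1) with hC
  have hsplit : l = A ++ (B ++ C) := by
    rw [hA, hB, hC, List.take_append_drop, List.take_append_drop]
  have htake2 : l.take t2 = A ++ B := by
    rw [hA, hB, ← List.take_add]
    congr 1
    omega
  set v := dst j A with hv
  have hvB : dst v B = v := by
    have : dst j (A ++ B) = dst (dst j A) B := dst_append _ _ _
    rw [← htake2] at this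
    rw [hv, ← this, ← hvv]
  have hlenB : B.length = t2 - t1 := by
    rw [hB]
    rw [List.length_take, List.length_drop, hlen]
    omega
  have hlenA : A.length = t1 := by rw [hA, List.length_take, hlen]; omega
  have hlenC : C.length = k - t2 := by rw [hC, List.length_drop, List.length_drop, hlen]; omega
  have hdstC : dst v C = j := by
    have h1 : dst j l = dst v (B ++ C) := by
      rw [hsplit, dst_append]
    rw [dst_append, hvB] at h1
    rw [← h1, hdst]
  -- weights
  have hw : pw f j l = pw f v B + (pw f j A + pw f v C) := by
    rw [hsplit, pw_append, pw_append, ← hv, hvB]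
    rw [← add_assoc, add_comm (pw f j A) (pw f v B), add_assoc]
  have hAC : pw f j (A ++ C) = pw f j A + pw f v C := by rw [pw_append, ← hv]
  have hdstAC : dst j (A ++ C) = j := by rw [dst_append, ← hv, hdstC]
  have hposs : 0 < pw f v B ∨ 0 < pw f j (A ++ C) := by
    by_contra hcon
    push_neg at hcon
    have : pw f j l ≤ 0 := by
      rw [hw, ← hAC]
      exact add_nonpos hcon.1 hcon.2
    exact absurd hpos (not_lt.2 this)
  rcases hposs with h | h
  · exact ih (t2 - t1) (by omega) B v hlenB (by omega) hvB h
  · exact ih (k - (t2 - t1)) (by omega) (A ++ C) j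
      (by rw [List.length_append, hlenA, hlenC]; omega) (by omega) hdstAC h

-- word combinatorics
def cnt (w : List Bool) : ℤ := (w.count true : ℤ) - (w.count false : ℤ)

lemma cnt_nil : cnt [] = 0 := by simp [cnt]

lemma cnt_append (a b : List Bool) : cnt (a ++ b) = cnt a + cnt b := by
  simp [cnt, List.count_append]; ring

lemma cnt_singleton (x : Bool) : cnt [x] = if x then 1 else -1 := by
  cases x <;> simp [cnt]

lemma cnt_cons (x : Bool) (w : List Bool) : cnt (x :: w) = cnt [x] + cnt w := by
  have : x :: w = [x] ++ w := rfl
  rw [this, cnt_append]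

lemma length_even_of_cnt_zero {w : List Bool} (h : cnt w = 0) : w.length % 2 = 0 := by
  have hl : w.length = w.count true + w.count false := by
    have := List.length_eq_countP_add_countP (· == true) (l := w)
    simpa [List.count] using this
  have : (w.count true : ℤ) = w.count false := by linarith [h, sub_eq_zero.mp h]
  omega

abbrev SW (d : ℕ) : Language Bool :=
  SL ({[true]} : Language Bool) ({[false]} : Language Bool) d

lemma SW_succ (d : ℕ) : SW (d+1) =
    ({[true]} : Language Bool) * SW d * SW d * {[false]}
      + ({[false]} : Language Bool) * SW d * SW d * {[true]} + 1 := rfl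

lemma SW_nil (d : ℕ) : [] ∈ SW d := by
  cases d with
  | zero => exact Language.nil_mem_one
  | succ d => rw [SW_succ]; rw [Language.mem_add]; right; exact Language.nil_mem_one

lemma SW_cons_t {d : ℕ} {s s' : List Bool} (hs : s ∈ SW d) (hs' : s' ∈ SW d) :
    true :: (s ++ (s' ++ [false])) ∈ SW (d+1) := by
  rw [SW_succ, Language.mem_add]
  left
  rw [Language.mem_add]
  left
  have h1 : [true] ++ s ∈ ({[true]} : Language Bool) * SW d :=
    Language.append_mem_mul rfl hs
  have h2 : ([true] ++ s) ++ s' ∈ ({[true]} : Language Bool) * SW d * SW d :=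
    Language.append_mem_mul h1 hs'
  have h3 := Language.append_mem_mul h2 (by rfl :
    [false] ∈ ({[false]} : Language Bool))
  simpa using h3

lemma SW_cons_f {d : ℕ} {s s' : List Bool} (hs : s ∈ SW d) (hs' : s' ∈ SW d) :
    false :: (s ++ (s' ++ [true])) ∈ SW (d+1) := by
  rw [SW_succ, Language.mem_add]
  left
  rw [Language.mem_add]
  right
  have h1 : [false] ++ s ∈ ({[false]} : Language Bool) * SW d :=
    Language.append_mem_mul rfl hs
  have h2 : ([false] ++ s) ++ s' ∈ ({[false]} : Language Bool) * SW d * SW d :=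
    Language.append_mem_mul h1 hs'
  have h3 := Language.append_mem_mul h2 (by rfl :
    [true] ∈ ({[true]} : Language Bool))
  simpa using h3

lemma SW_elim {d : ℕ} {x : List Bool} (hx : x ∈ SW (d+1)) :
    x = [] ∨ (∃ s s', s ∈ SW d ∧ s' ∈ SW d ∧ x = true :: (s ++ (s' ++ [false])))
      ∨ (∃ s s', s ∈ SW d ∧ s' ∈ SW d ∧ x = false :: (s ++ (s' ++ [true]))) := by
  rw [SW_succ, Language.mem_add] at hx
  rcases hx with hx | hx
  · rw [Language.mem_add] at hx
    rcases hx with hx | hx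
    · right; left
      obtain ⟨abc, habc, e, he, rfl⟩ := Language.mem_mul.1 hx
      obtain ⟨ab, hab, c, hc, rfl⟩ := Language.mem_mul.1 habc
      obtain ⟨a, ha, b, hb, rfl⟩ := Language.mem_mul.1 hab
      have ha' : a = [true] := ha
      have he' : e = [false] := he
      subst ha' he'
      exact ⟨b, c, hb, hc, by simp⟩
    · right; right
      obtain ⟨abc, habc, e, he, rfl⟩ := Language.mem_mul.1 hx
      obtain ⟨ab, hab, c, hc, rfl⟩ := Language.mem_mul.1 habc
      obtain ⟨a, ha, b, hb, rfl⟩ := Language.mem_mul.1 hab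
      have ha' : a = [false] := ha
      have he' : e = [true] := he
      subst ha' he'
      exact ⟨b, c, hb, hc, by simp⟩
  · left; exact hx

lemma SW_le_succ (d : ℕ) : SW d ≤ SW (d+1) := by
  induction d with
  | zero =>
    intro x hx
    have : x = [] := hx
    subst this; exact SW_nil 1
  | succ d ih =>
    intro x hx
    rcases SW_elim hx with rfl | ⟨s, s', hs, hs', rfl⟩ | ⟨s, s', hs, hs', rfl⟩
    · exact SW_nil _
    · exact SW_cons_t (ih hs) (ih hs')
    · exact SW_cons_f (ih hs) (ih hs')

lemma SW_mono {d e : ℕ} (h : d ≤ e) : SW d ≤ SW e := by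
  induction e with
  | zero => have : d = 0 := by omega
            subst this; exact le_rfl
  | succ e ih =>
    rcases Nat.lt_or_ge d (e+1) with h' | h'
    · exact le_trans (ih (by omega)) (SW_le_succ e)
    · have : d = e + 1 := by omega
      subst this; exact le_rfl

lemma SW_balanced {d : ℕ} {x : List Bool} (hx : x ∈ SW d) : cnt x = 0 := by
  induction d generalizing x with
  | zero => have : x = [] := hx; subst this; exact cnt_nil
  | succ d ih =>
    rcases SW_elim hx with rfl | ⟨s, s', hs, hs', rfl⟩ | ⟨s, s', hs, hs', rfl⟩
    · exact cnt_nil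
    · rw [cnt_cons, cnt_append, cnt_append, ih hs, ih hs', cnt_singleton, cnt_singleton]; simp
    · rw [cnt_cons, cnt_append, cnt_append, ih hs, ih hs', cnt_singleton, cnt_singleton]; simp

lemma SW_shape {d : ℕ} {x : List Bool} (hx : x ∈ SW d) :
    x = [] ∨ (∃ Z, x = true :: Z ++ [false]) ∨ (∃ Z, x = false :: Z ++ [true]) := by
  cases d with
  | zero => left; exact hx
  | succ d =>
    rcases SW_elim hx with rfl | ⟨s, s', _, _, rfl⟩ | ⟨s, s', _, _, rfl⟩
    · left; rfl
    · right; left; exact ⟨s ++ s', by simp⟩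
    · right; right; exact ⟨s ++ s', by simp⟩

lemma SW_map_not {d : ℕ} {x : List Bool} (hx : x ∈ SW d) : x.map (fun b => !b) ∈ SW d := by
  induction d generalizing x with
  | zero => have : x = [] := hx; subst this; exact SW_nil 0
  | succ d ih =>
    rcases SW_elim hx with rfl | ⟨s, s', hs, hs', rfl⟩ | ⟨s, s', hs, hs', rfl⟩
    · exact SW_nil _
    · have := SW_cons_f (ih hs) (ih hs')
      simpa using this
    · have := SW_cons_t (ih hs) (ih hs')
      simpa using this

lemma shape2 {l : List Bool} {x y : Bool} (h2 : 2 ≤ l.length) (hh : l.head? = some x)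
    (hl : l.getLast? = some y) : ∃ Z, l = x :: Z ++ [y] := by
  cases l with
  | nil => simp at h2
  | cons a t =>
    have hax : a = x := by simpa using hh
    subst hax
    have htne : t ≠ [] := by
      intro h; subst h; simp at h2
    refine ⟨t.dropLast, ?_⟩
    have h3 : t.dropLast ++ [t.getLast htne] = t := List.dropLast_append_getLast htne
    have h4 : (a :: t).getLast? = some (t.getLast htne) := by
      rw [List.getLast?_eq_getLast (l := a :: t) (by simp), List.getLast_cons htne]
    rw [hl] at h4
    have h5 : t.getLast htne = y := by injection h4.symm
    rw [← h5, List.cons_append, h3]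

lemma take_cnt_succ {w : List Bool} {j : ℕ} (hj : j < w.length) :
    cnt (w.take (j+1)) = cnt (w.take j) + cnt [w[j]] := by
  rw [List.take_succ]
  rw [List.getElem?_eq_getElem hj]
  rw [cnt_append]
  rfl

lemma first_return {w : List Bool} (hw : cnt w = 0) (hhead : w.head? = some true)
    (hne : w ≠ []) :
    ∃ r, 2 ≤ r ∧ r ≤ w.length ∧ cnt (w.take r) = 0 ∧
      (w.take r).getLast? = some false ∧ (w.take r).head? = some true := by
  have hlen : 1 ≤ w.length := List.length_pos_iff.2 hne
  have hQ : ∃ j, 1 ≤ j ∧ cnt (w.take j) = 0 :=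
    ⟨w.length, hlen, by rw [List.take_length]; exact hw⟩
  classical
  obtain ⟨r, ⟨hr1, hrc⟩, hmin⟩ : ∃ r, (1 ≤ r ∧ cnt (w.take r) = 0) ∧
      ∀ j, j < r → ¬ (1 ≤ j ∧ cnt (w.take j) = 0) :=
    ⟨Nat.find hQ, Nat.find_spec hQ, fun j hj => Nat.find_min hQ hj⟩
  have hrlen : r ≤ w.length := by
    by_contra hcon
    exact hmin w.length (by omega) ⟨hlen, by rw [List.take_length]; exact hw⟩
  have htake1 : w.take 1 = [true] := by
    cases w with
    | nil => exact absurd rfl hne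
    | cons a t =>
      have : a = true := by simpa using hhead
      subst this; rfl
  have hpos : ∀ j, 1 ≤ j → j < r → 1 ≤ cnt (w.take j) := by
    intro j
    induction j with
    | zero => omega
    | succ j ihj =>
      intro _ hjr
      by_cases hj0 : j = 0
      · subst hj0; norm_num; rw [htake1, cnt_singleton]; simp
      · have hj1 : 1 ≤ j := by omega
        have hjr' : j < r := by omega
        have hjw : j < w.length := by omega
        have := ihj hj1 hjr'
        have hne0 : cnt (w.take (j+1)) ≠ 0 := fun h => hmin (j+1) hjr ⟨by omega, h⟩
        rw [take_cnt_succ hjw] at hne0 ⊢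
        rcases Bool.eq_false_or_eq_true w[j] with h | h <;>
          rw [h, cnt_singleton] at hne0 ⊢ <;> simp at hne0 ⊢ <;> omega
  have hr2 : 2 ≤ r := by
    by_contra hcon
    have : r = 1 := by omega
    subst this
    rw [htake1, cnt_singleton] at hrc
    simp at hrc
  obtain ⟨r', rfl⟩ : ∃ r', r = r' + 1 := ⟨r - 1, by omega⟩
  have hr1w : r' < w.length := by omega
  have hsucc : cnt (w.take (r'+1)) = cnt (w.take r') + cnt [w[r']] := take_cnt_succ hr1w
  have hprev : 1 ≤ cnt (w.take r') := hpos r' (by omega) (by omega)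
  have hlast : w[r'] = false := by
    cases hb : w[r'] with
    | false => rfl
    | true =>
      rw [hrc, hb, cnt_singleton] at hsucc
      simp at hsucc
      omega
  have htr : w.take (r'+1) = w.take r' ++ [w[r']] := by
    rw [List.take_succ, List.getElem?_eq_getElem hr1w]
    rfl
  refine ⟨r'+1, hr2, hrlen, hrc, ?_, ?_⟩
  · rw [htr, hlast]
    simp
  · cases w with
    | nil => exact absurd rfl hne
    | cons a t =>
      have ha : a = true := by simpa using hhead
      subst ha
      rw [List.take_succ_cons]
      rfl

lemma cnt_map_not (w : List Bool) : cnt (w.map (fun b => !b)) = - cnt w := by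
  induction w with
  | nil => simp [cnt_nil]
  | cons a t ih =>
    have h1 : cnt ((!a) :: List.map (fun b => !b) t) =
        cnt [!a] + cnt (List.map (fun b => !b) t) := cnt_cons _ _
    rw [List.map_cons, h1, ih, cnt_cons a t]
    cases a <;> simp [cnt_singleton] <;> ring

lemma map_not_invol (w : List Bool) : (w.map (fun b => !b)).map (fun b => !b) = w := by
  rw [List.map_map]
  have : ((fun b => !b) ∘ (fun b => !b)) = (id : Bool → Bool) := by
    funext b; cases b <;> rfl
  rw [this, List.map_id]

def PAp (w : List Bool) : Prop :=
  ∀ (x : Bool) (Z : List Bool) (y : Bool), w = x :: Z ++ [y] → x ≠ y → cnt w = 0 →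
    w ∈ SW (w.length / 2)

def PCp (w : List Bool) : Prop :=
  cnt w = 0 → w ≠ [] → w.head? = some true → w.getLast? = some true →
    ∃ u u', w = u ++ u' ∧ u ∈ SW (w.length / 2) ∧ u' ∈ SW (w.length / 2) ∧
      (u' = [] ∨ ∃ Z, u' = false :: Z ++ [true])

def PCp' (w : List Bool) : Prop :=
  cnt w = 0 → w ≠ [] → w.head? = some false → w.getLast? = some false →
    ∃ u u', w = u ++ u' ∧ u ∈ SW (w.length / 2) ∧ u' ∈ SW (w.length / 2) ∧
      (u' = [] ∨ ∃ Z, u' = true :: Z ++ [false])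

def PBp (w : List Bool) : Prop :=
  cnt w = 0 → ∃ s s', w = s ++ s' ∧ s ∈ SW (w.length / 2) ∧ s' ∈ SW (w.length / 2)

theorem main_words : ∀ L : ℕ,
    (∀ w : List Bool, w.length = L → PAp w) ∧ (∀ w : List Bool, w.length = L → PCp w) ∧
    (∀ w : List Bool, w.length = L → PCp' w) ∧ (∀ w : List Bool, w.length = L → PBp w) := by
  intro L
  induction L using Nat.strong_induction_on with
  | _ L ih =>
  have hA : ∀ w : List Bool, w.length = L → PAp w := by
    intro w hwL x Z y hshape hxy hbal
    have hzlen1 : Z.length = L - 2 := by rw [hshape] at hwL; simp at hwL; omega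
    have hzlen2 : 2 ≤ L := by rw [hshape] at hwL; simp at hwL; omega
    have hZbal : cnt Z = 0 := by
      rw [hshape] at hbal
      rw [cnt_append, cnt_cons, cnt_singleton, cnt_singleton] at hbal
      cases x <;> cases y <;> simp at hbal hxy ⊢ <;> omega
    have hBZ := (ih (L - 2) (by omega)).2.2.2 Z (by omega) hZbal
    obtain ⟨s, s', rfl, hs, hs'⟩ := hBZ
    have hsl : (s ++ s').length = L - 2 := hzlen1
    rw [hsl] at hs hs'
    have heven : L % 2 = 0 := by
      have h2 := length_even_of_cnt_zero hZbal
      rw [hsl] at h2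
      omega
    have hdep : (L - 2) / 2 + 1 = L / 2 := by omega
    rw [hwL]
    cases x
    · have hy : y = true := by cases y <;> simp_all
      subst hy
      have := SW_cons_f (d := (L-2)/2) hs hs'
      rw [hdep] at this
      rw [hshape]
      simpa using this
    · have hy : y = false := by cases y <;> simp_all
      subst hy
      have := SW_cons_t (d := (L-2)/2) hs hs'
      rw [hdep] at this
      rw [hshape]
      simpa using this
  have hC : ∀ w : List Bool, w.length = L → PCp w := by
    intro w hwL hbal hne hhead hlast
    rw [hwL]
    obtain ⟨r, hr2, hrlen, hP1bal, hP1last, hP1head⟩ := first_return hbal hhead hne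
    set P1 := w.take r with hP1
    set rest := w.drop r with hrest
    have hsplit : w = P1 ++ rest := (List.take_append_drop r w).symm
    have hrL : r < L := by
      rcases Nat.lt_or_ge r L with h | h
      · exact h
      · exfalso
        have : r = L := by omega
        subst this
        have : P1 = w := by rw [hP1, ← hwL, List.take_length]
        rw [this, hlast] at hP1last
        simp at hP1last
    have hlenP1 : P1.length = r := by rw [hP1, List.length_take]; omega
    have hlenrest : rest.length = L - r := by rw [hrest, List.length_drop, hwL]
    have hrestne : rest ≠ [] := by
      intro h
      rw [h] at hlenrest
      simp at hlenrest
      omega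
    have hrestbal : cnt rest = 0 := by
      have := cnt_append P1 rest
      rw [← hsplit, hbal, hP1bal] at this
      omega
    have hrestlast : rest.getLast? = some true := by
      rw [hsplit, List.getLast?_append_of_ne_nil _ hrestne] at hlast
      exact hlast
    obtain ⟨Z1, hZ1⟩ := shape2 (by omega) hP1head hP1last
    have hP1mem : P1 ∈ SW (r / 2) := by
      have := (ih r (by omega)).1 P1 hlenP1 true Z1 false hZ1 (by simp) hP1bal
      rw [hlenP1] at this
      exact this
    have hrdiv : r / 2 ≤ L / 2 := by omega
    have hLrdiv : (L - r) / 2 ≤ L / 2 := by omega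
    obtain ⟨hb, hheadrest⟩ : ∃ b, rest.head? = some b := by
      cases hh : rest.head? with
      | some b => exact ⟨b, rfl⟩
      | none => exact absurd (List.head?_eq_none_iff.mp hh) hrestne
    cases hb
    · -- rest head = false
      have hrest2 : 2 ≤ rest.length := by
        have := length_even_of_cnt_zero hrestbal
        have h1 : 1 ≤ rest.length := List.length_pos_iff.2 hrestne
        omega
      obtain ⟨Z2, hZ2⟩ := shape2 hrest2 hheadrest hrestlast
      have hrestmem : rest ∈ SW ((L - r) / 2) := by
        have := (ih (L - r) (by omega)).1 rest hlenrest false Z2 true hZ2 (by simp) hrestbal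
        rw [hlenrest] at this
        exact this
      refine ⟨P1, rest, hsplit, SW_mono hrdiv hP1mem, SW_mono hLrdiv hrestmem,
        Or.inr ⟨Z2, hZ2⟩⟩
    · -- rest head = true
      obtain ⟨u, u', hru, hu, hu', hshp⟩ :=
        (ih (L - r) (by omega)).2.1 rest hlenrest hrestbal hrestne hheadrest hrestlast
      rw [hlenrest] at hu hu'
      rcases hshp with rfl | ⟨Z2, hZ2⟩
      · -- u' = [], impossible
        exfalso
        rw [List.append_nil] at hru
        subst hru
        rcases SW_shape hu with h0 | ⟨Z3, hZ3⟩ | ⟨Z3, hZ3⟩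
        · exact hrestne h0
        · rw [hZ3] at hrestlast
          rw [List.getLast?_concat] at hrestlast
          simp at hrestlast
        · rw [hZ3] at hheadrest
          simp at hheadrest
      · -- u' = false :: Z2 ++ [true]
        have hushape : ∃ Z3, u = true :: Z3 ++ [false] := by
          rcases SW_shape hu with h0 | ⟨Z3, hZ3⟩ | ⟨Z3, hZ3⟩
          · exfalso
            rw [h0, List.nil_append] at hru
            rw [hru, hZ2] at hheadrest
            simp at hheadrest
          · exact ⟨Z3, hZ3⟩
          · exfalso
            rw [hru, hZ3] at hheadrest
            simp at hheadrest
        obtain ⟨Z3, hZ3⟩ := hushape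
        set M := P1 ++ u with hM
        have hMshape : M = true :: (Z1 ++ [false] ++ (true :: Z3)) ++ [false] := by
          rw [hM, hZ1, hZ3]
          simp
        have hMbal : cnt M = 0 := by
          rw [hM, cnt_append, hP1bal, SW_balanced hu]; norm_num
        have hu'len : 2 ≤ u'.length := by rw [hZ2]; simp
        have hMlen : M.length = r + u.length := by rw [hM, List.length_append, hlenP1]
        have hulen : u.length + u'.length = L - r := by
          have : rest.length = u.length + u'.length := by rw [hru, List.length_append]
          omega
        have hMlenL : M.length < L := by omega
        have hMmem : M ∈ SW (M.length / 2) :=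
          (ih M.length hMlenL).1 M rfl true _ false hMshape (by simp) hMbal
        have hMdiv : M.length / 2 ≤ L / 2 := by omega
        refine ⟨M, u', ?_, SW_mono hMdiv hMmem, SW_mono hLrdiv hu', Or.inr ⟨Z2, hZ2⟩⟩
        rw [hsplit, hru, hM, List.append_assoc]
  have hC' : ∀ w : List Bool, w.length = L → PCp' w := by
    intro w hwL hbal hne hhead hlast
    rw [hwL]
    set w' := w.map (fun b => !b) with hw'
    have hw'L : w'.length = L := by rw [hw', List.length_map, hwL]
    have hw'bal : cnt w' = 0 := by rw [hw', cnt_map_not, hbal]; ring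
    have hw'ne : w' ≠ [] := by
      intro h; apply hne
      cases w
      · rfl
      · simp [hw'] at h
    have hw'head : w'.head? = some true := by
      rw [hw', List.head?_map, hhead]
      rfl
    have hw'last : w'.getLast? = some true := by
      rw [hw', List.getLast?_map, hlast]
      rfl
    obtain ⟨u, u', hru, hu, hu', hshp⟩ := hC w' hw'L hw'bal hw'ne hw'head hw'last
    refine ⟨u.map (fun b => !b), u'.map (fun b => !b), ?_, ?_, ?_, ?_⟩
    · have := congrArg (List.map (fun b => !b)) hru
      rw [hw', map_not_invol] at this
      rw [this, List.map_append]
    · rw [hw'L] at hu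
      exact SW_map_not hu
    · rw [hw'L] at hu'
      exact SW_map_not hu'
    · rcases hshp with rfl | ⟨Z, hZ⟩
      · left; rfl
      · right
        exact ⟨Z.map (fun b => !b), by rw [hZ]; simp⟩
  have hB : ∀ w : List Bool, w.length = L → PBp w := by
    intro w hwL hbal
    rcases List.eq_nil_or_concat w with rfl | ⟨_, _, _⟩
    · exact ⟨[], [], rfl, SW_nil _, SW_nil _⟩
    · have hne : w ≠ [] := by
        rename_i t a h
        rw [h]; simp
      have hlen2 : 2 ≤ w.length := by
        have := length_even_of_cnt_zero hbal
        have : 1 ≤ w.length := List.length_pos_iff.2 hne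
        omega
      obtain ⟨x, hx⟩ : ∃ x, w.head? = some x := by
        cases w
        · exact absurd rfl hne
        · exact ⟨_, rfl⟩
      obtain ⟨y, hy⟩ : ∃ y, w.getLast? = some y := by
        cases w
        · exact absurd rfl hne
        · exact ⟨_, List.getLast?_eq_getLast_of_ne_nil hne⟩
      by_cases hxy : x = y
      · subst hxy
        rcases Bool.eq_false_or_eq_true x with hx1 | hx1
        · subst hx1
          obtain ⟨u, u', h1, h2, h3, _⟩ := hC w hwL hbal hne hx hy
          exact ⟨u, u', h1, h2, h3⟩
        · subst hx1
          obtain ⟨u, u', h1, h2, h3, _⟩ := hC' w hwL hbal hne hx hy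
          exact ⟨u, u', h1, h2, h3⟩
      · obtain ⟨Z, hZ⟩ := shape2 hlen2 hx hy
        refine ⟨w, [], by simp, ?_, SW_nil _⟩
        exact hA w hwL x Z y hZ hxy hbal
  exact ⟨hA, hC, hC', hB⟩

theorem balanced_split (w : List Bool) (hbal : cnt w = 0) :
    ∃ s s', w = s ++ s' ∧ s ∈ SW (w.length / 2) ∧ s' ∈ SW (w.length / 2) :=
  (main_words w.length).2.2.2 w rfl hbal

-- kstar helpers
lemma kstar_append {α : Type*} {L : Language α} {a b : List α}
    (ha : a ∈ KStar.kstar L) (hb : b ∈ KStar.kstar L) : a ++ b ∈ KStar.kstar L := by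
  obtain ⟨A, rfl, hA⟩ := Language.mem_kstar.1 ha
  obtain ⟨B, rfl, hB⟩ := Language.mem_kstar.1 hb
  rw [← List.flatten_append]
  exact Language.join_mem_kstar (fun y hy => by
    rcases List.mem_append.1 hy with h | h
    · exact hA y h
    · exact hB y h)

lemma kstar_map_not {d : ℕ} {s : List Bool} (hs : s ∈ KStar.kstar (SW d)) :
    s.map (fun b => !b) ∈ KStar.kstar (SW d) := by
  obtain ⟨A, rfl, hA⟩ := Language.mem_kstar.1 hs
  rw [List.map_flatten]
  exact Language.join_mem_kstar (fun y hy => by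
    obtain ⟨z, hz, rfl⟩ := List.mem_map.1 hy
    exact SW_map_not (hA z hz))

lemma even_half_le {a b : ℕ} (h : a % 2 = 0) (hle : a ≤ b) : a / 2 ≤ b / 2 := by omega

lemma balanced_mem_kstar {n : ℕ} {w : List Bool} (hbal : cnt w = 0) (hlen : w.length ≤ n) :
    w ∈ KStar.kstar (SW (n / 2)) := by
  obtain ⟨s, s', rfl, hs, hs'⟩ := balanced_split w hbal
  have heven := length_even_of_cnt_zero hbal
  have hmono : SW ((s ++ s').length / 2) ≤ SW (n / 2) := SW_mono (even_half_le heven hlen)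
  exact kstar_append
    (Language.mem_kstar.2 ⟨[s], by simp, fun y hy => by
      simp at hy; subst hy; exact hmono hs⟩)
    (Language.mem_kstar.2 ⟨[s'], by simp, fun y hy => by
      simp at hy; subst hy; exact hmono hs'⟩)

-- repetition
def wrep {α : Type*} (w : List α) : ℕ → List α
  | 0 => []
  | m + 1 => w ++ wrep w m

lemma wrep_mem_kstar {d : ℕ} {w : List Bool} (hw : w ∈ KStar.kstar (SW d)) (m : ℕ) :
    wrep w m ∈ KStar.kstar (SW d) := by
  induction m with
  | zero => exact Language.nil_mem_kstar _
  | succ m ih => exact kstar_append hw ih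

lemma map_fst_wrep {n : ℕ} (l : List (Bool × Fin n)) (m : ℕ) :
    (wrep l m).map Prod.fst = wrep (l.map Prod.fst) m := by
  induction m with
  | zero => rfl
  | succ m ih => show (l ++ wrep l m).map Prod.fst = _; rw [List.map_append, ih]; rfl

lemma dst_wrep {n : ℕ} (l : List (Bool × Fin n)) (j : Fin n) (hd : dst j l = j) (m : ℕ) :
    dst j (wrep l m) = j := by
  induction m with
  | zero => rfl
  | succ m ih => show dst j (l ++ wrep l m) = j; rw [dst_append, hd, ih]

lemma pw_wrep {n : ℕ} (f : Bool → MPMat n) (l : List (Bool × Fin n)) (j : Fin n)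
    (hd : dst j l = j) (om : ℝ) (hom : pw f j l = (om : EReal)) (m : ℕ) :
    pw f j (wrep l m) = ((m * om : ℝ) : EReal) := by
  induction m with
  | zero => show (0 : EReal) = _; norm_num
  | succ m ih =>
    show pw f j (l ++ wrep l m) = _
    rw [pw_append, hd, hom, ih, ← EReal.coe_add]
    congr 1
    push_cast
    ring

-- rotation with positive prefixes
lemma cnt_take_add' (w : List Bool) (a s : ℕ) :
    cnt (w.take (a + s)) = cnt (w.take a) + cnt ((w.drop a).take s) := by
  rw [List.take_add, cnt_append]

lemma cnt_rotate (w : List Bool) (t : ℕ) : cnt (w.drop t ++ w.take t) = cnt w := by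
  rw [cnt_append, add_comm, ← cnt_append, List.take_append_drop]

lemma rot_pos {w : List Bool} (hpos : 1 ≤ cnt w) :
    ∃ t, t ≤ w.length ∧
      ∀ s, 1 ≤ s → s ≤ w.length → 1 ≤ cnt ((w.drop t ++ w.take t).take s) := by
  classical
  set k := w.length with hk
  set b : ℕ → ℤ := fun j => cnt (w.take j) with hb
  -- minimum value of b on [0, k]
  have hne : (Finset.image b (Finset.range (k+1))).Nonempty :=
    ⟨b 0, Finset.mem_image.2 ⟨0, by simp, rfl⟩⟩
  set mu := (Finset.image b (Finset.range (k+1))).min' hne with hmu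
  obtain ⟨t0, ht0r, ht0⟩ : ∃ t0, t0 ∈ Finset.range (k+1) ∧ b t0 = mu := by
    obtain ⟨x, hx, hxe⟩ := Finset.mem_image.1 ((Finset.image b (Finset.range (k+1))).min'_mem hne)
    exact ⟨x, hx, hxe⟩
  have hmin : ∀ j, j ≤ k → mu ≤ b j := fun j hj =>
    Finset.min'_le _ _ (Finset.mem_image.2 ⟨j, Finset.mem_range.2 (by omega), rfl⟩)
  set t := Nat.findGreatest (fun j => b j = mu) k with ht
  have ht0k : t0 ≤ k := by have := Finset.mem_range.1 ht0r; omega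
  have htP : b t = mu := by
    have h5 := Nat.findGreatest_spec (P := fun j => b j = mu) (n := k) ht0k ht0
    exact h5
  have htk : t ≤ k := Nat.findGreatest_le k
  have hgt : ∀ j, t < j → j ≤ k → b j ≠ mu := fun j h1 h2 =>
    Nat.findGreatest_is_greatest h1 h2
  have hstrict : ∀ j, t < j → j ≤ k → mu + 1 ≤ b j := by
    intro j h1 h2
    have := hmin j h2
    have := hgt j h1 h2
    omega
  refine ⟨t, htk, ?_⟩
  intro s hs1 hs2
  have hlendrop : (w.drop t).length = k - t := by rw [List.length_drop]
  by_cases hcase : s ≤ k - t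
  · have htake : (w.drop t ++ w.take t).take s = (w.drop t).take s := by
      rw [List.take_append]
      rw [hlendrop, (by omega : s - (k - t) = 0)]
      simp
    rw [htake]
    have hid := cnt_take_add' w t s
    have hts : b (t + s) = mu + cnt ((w.drop t).take s) := by
      rw [← htP]; exact hid
    have := hstrict (t + s) (by omega) (by omega)
    omega
  · have htake : (w.drop t ++ w.take t).take s
        = w.drop t ++ (w.take t).take (s - (k - t)) := by
      rw [List.take_append, hlendrop]
      congr 1
      apply List.take_of_length_le
      rw [hlendrop]
      omega
    have hdropcnt : cnt (w.drop t) = cnt w - mu := by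
      have h6 := cnt_append (w.take t) (w.drop t)
      rw [List.take_append_drop] at h6
      have hbt : b t = cnt (w.take t) := rfl
      omega
    have htt : (w.take t).take (s - (k - t)) = w.take (s - (k - t)) := by
      rw [List.take_take]
      congr 1
      omega
    rw [htake, cnt_append, hdropcnt, htt]
    have h7 : mu ≤ cnt (w.take (s - (k - t))) := hmin (s - (k - t)) (by omega)
    have hw1 : 1 ≤ cnt w := hpos
    omega

-- block decomposition
lemma blocks (n : ℕ) : ∀ (m : ℕ) (v : List Bool), 1 ≤ m → cnt v = (m : ℤ) →
    v.length ≤ n → (∀ s, 1 ≤ s → s ≤ v.length → 1 ≤ cnt (v.take s)) →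
    v ∈ (({[true]} : Language Bool) * KStar.kstar (SW (n/2))) ^ m := by
  intro m
  induction m with
  | zero => omega
  | succ m ih =>
    intro v hm hcnt hlen hpre
    classical
    have hvne : v ≠ [] := by
      intro h; rw [h, cnt_nil] at hcnt; omega
    obtain ⟨a0, v', rfl⟩ : ∃ a0 v', v = a0 :: v' := by
      cases v with
      | nil => exact absurd rfl hvne
      | cons a t => exact ⟨a, t, rfl⟩
    have ha0 : a0 = true := by
      have h1 := hpre 1 le_rfl (by simp)
      cases a0 with
      | true => rfl
      | false =>
        rw [show ((false : Bool) :: v').take 1 = [false] from rfl, cnt_singleton] at h1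
        simp at h1
    subst ha0
    have hcv' : cnt v' = (m : ℤ) := by
      have h2 := cnt_cons true v'
      rw [cnt_singleton] at h2
      rw [h2] at hcnt
      simp at hcnt
      push_cast at hcnt ⊢
      omega
    have hv'len : v'.length + 1 ≤ n := by simpa using hlen
    by_cases hm0 : m = 0
    · subst hm0
      rw [pow_one]
      have hk : v' ∈ KStar.kstar (SW (n/2)) :=
        balanced_mem_kstar (by simpa using hcv') (by omega)
      exact Language.append_mem_mul
        (show [true] ∈ ({[true]} : Language Bool) from rfl) hk
    · have hm1 : 1 ≤ m := by omega
      set a := Nat.findGreatest (fun x => cnt (v'.take x) = 0) v'.length with ha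
      have haP : cnt (v'.take a) = 0 := by
        have h5 := Nat.findGreatest_spec (P := fun x => cnt (v'.take x) = 0)
          (n := v'.length) (m := 0) (Nat.zero_le _) (by simp [cnt_nil])
        exact h5
      have hal : a ≤ v'.length := Nat.findGreatest_le _
      have hagt : ∀ x, a < x → x ≤ v'.length → cnt (v'.take x) ≠ 0 := fun x h1 h2 =>
        Nat.findGreatest_is_greatest h1 h2
      have hsplit : v' = v'.take a ++ v'.drop a := (List.take_append_drop a v').symm
      have hcr : cnt (v'.drop a) = (m : ℤ) := by
        have h3 := cnt_append (v'.take a) (v'.drop a)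
        rw [List.take_append_drop, haP] at h3
        omega
      have hrlen : (v'.drop a).length = v'.length - a := List.length_drop
      have hv'pre : ∀ x, x ≤ v'.length → 0 ≤ cnt (v'.take x) := by
        intro x hx
        rcases Nat.eq_zero_or_pos x with rfl | hx0
        · simp [cnt_nil]
        · have h4 := hpre (x+1) (by omega) (by simp only [List.length_cons]; omega)
          rw [List.take_succ_cons] at h4
          rw [cnt_cons, cnt_singleton] at h4
          simp at h4
          omega
      have hrpre : ∀ s, 1 ≤ s → s ≤ (v'.drop a).length → 1 ≤ cnt ((v'.drop a).take s) := by
        intro s h1 h2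
        have hid := cnt_take_add' v' a s
        have h0 : 0 ≤ cnt (v'.take (a+s)) := hv'pre _ (by omega)
        have hne2 : cnt (v'.take (a+s)) ≠ 0 := hagt _ (by omega) (by omega)
        rw [haP] at hid
        omega
      have hihr := ih (v'.drop a) hm1 hcr (by omega) hrpre
      have hBk : [true] ++ v'.take a ∈
          (({[true]} : Language Bool) * KStar.kstar (SW (n/2))) := by
        refine Language.append_mem_mul
          (show [true] ∈ ({[true]} : Language Bool) from rfl) (balanced_mem_kstar haP ?_)
        have : (v'.take a).length = min a v'.length := List.length_take
        omega
      rw [pow_succ']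
      have hform : (true :: v') = ([true] ++ v'.take a) ++ v'.drop a := by
        conv_lhs => rw [hsplit]
        simp
      rw [hform]
      exact Language.append_mem_mul hBk hihr

lemma lp_pow_map_not {d : ℕ} : ∀ (m : ℕ) (x : List Bool),
    x ∈ (({[true]} : Language Bool) * KStar.kstar (SW d)) ^ m →
    x.map (fun b => !b) ∈ (({[false]} : Language Bool) * KStar.kstar (SW d)) ^ m := by
  intro m
  induction m with
  | zero =>
    intro x hx
    rw [pow_zero] at hx ⊢
    rw [Language.mem_one] at hx ⊢
    subst hx; rfl
  | succ m ih =>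
    intro x hx
    rw [pow_succ'] at hx ⊢
    obtain ⟨ab, hab, c, hc, rfl⟩ := Language.mem_mul.1 hx
    obtain ⟨a, haa, b, hb, rfl⟩ := Language.mem_mul.1 hab
    have ha' : a = [true] := haa
    subst ha'
    rw [List.map_append, List.map_append]
    refine Language.append_mem_mul (Language.append_mem_mul
      (show ([true].map (fun b => !b)) ∈ ({[false]} : Language Bool) from rfl)
      (kstar_map_not hb)) (ih c hc)

lemma short_circuit {n : ℕ} (P I : MPMat n)
    (hP : ∀ i j, P i j ≠ ⊤) (hI : ∀ i j, I i j ≠ ⊤) (hPd : ∀ j, P j j ≠ ⊥)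
    (HP : InGamma (langMat (mu2 P I)
      (({[true]} : Language Bool) * KStar.kstar (SW (n/2)))))
    (HI : InGamma (langMat (mu2 P I)
      (({[false]} : Language Bool) * KStar.kstar (SW (n/2))))) :
    ∀ (j : Fin n) (l : List (Bool × Fin n)), 1 ≤ l.length → l.length ≤ n →
      dst j l = j → ¬ (0 < pw (mu2 P I) j l) := by
  intro j l h1 hn hd hpos
  classical
  set f := mu2 P I with hf
  have hftop : ∀ b u v, f b u v ≠ ⊤ := by
    intro b u v
    cases b
    · exact hI u v
    · exact hP u v
  have hwtop : pw f j l ≠ ⊤ := pw_ne_top f hftop j l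
  have hwbot : pw f j l ≠ ⊥ := ne_of_gt (lt_of_le_of_lt bot_le hpos)
  obtain ⟨om, hom⟩ : ∃ om : ℝ, pw f j l = (om : EReal) :=
    ⟨(pw f j l).toReal, (EReal.coe_toReal hwtop hwbot).symm⟩
  have hom0 : 0 < om := by
    rw [hom] at hpos
    exact_mod_cast hpos
  set w := l.map Prod.fst with hw
  have hwlen : w.length = l.length := List.length_map Prod.fst
  have contra : ∀ (v : Fin n) (l' : List (Bool × Fin n)) (m : ℕ) (L : Language Bool),
      InGamma (langMat f L) → 1 ≤ m → (l'.map Prod.fst) ∈ L ^ m → dst v l' = v →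
      0 < pw f v l' → False := by
    intro v l' m L hG hm hmem hd' hpos'
    have hh1 : pw f v l' ≤ wordMat f (l'.map Prod.fst) v v := by
      have h9 := pw_le_wordMat f l' v
      rw [hd'] at h9
      exact h9
    have hh2 : wordMat f (l'.map Prod.fst) v v ≤ langMat f (L ^ m) v v :=
      wordMat_le_langMat f hmem v v
    have hh3 := le_mpPow_langMat f L m v v
    have hh4 := hG v m hm
    exact absurd (lt_of_lt_of_le hpos' (le_trans hh1 (le_trans hh2 (le_trans hh3 hh4))))
      (lt_irrefl 0)
  -- generic rotation of the circuit
  have rotc : ∀ t, t ≤ l.length →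
      dst (dst j (l.take t)) (l.drop t ++ l.take t) = dst j (l.take t) ∧
      pw f (dst j (l.take t)) (l.drop t ++ l.take t) = pw f j l ∧
      (l.drop t ++ l.take t).map Prod.fst = w.drop t ++ w.take t := by
    intro t htl
    have hsp : l = l.take t ++ l.drop t := (List.take_append_drop t l).symm
    have hd2 : dst (dst j (l.take t)) (l.drop t) = j := by
      have h10 : dst j l = dst (dst j (l.take t)) (l.drop t) := by
        conv_lhs => rw [hsp]
        rw [dst_append]
      rw [← h10, hd]
    refine ⟨?_, ?_, ?_⟩
    · rw [dst_append, hd2]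
    · rw [pw_append, hd2]
      have h11 : pw f j l = pw f j (l.take t) + pw f (dst j (l.take t)) (l.drop t) := by
        conv_lhs => rw [hsp]
        rw [pw_append]
      rw [h11, add_comm]
    · rw [List.map_append, hw, List.map_take, List.map_drop]
  rcases lt_trichotomy (cnt w) 0 with hneg | hzero | hposc
  · -- more i's than p's : use HI
    set m := (-cnt w).toNat with hm
    have hm1 : 1 ≤ m := by omega
    set w' := w.map (fun b => !b) with hw'
    have hcw' : cnt w' = (m : ℤ) := by
      rw [hw', cnt_map_not]
      omega
    obtain ⟨t, htl, hpre⟩ := rot_pos (w := w') (by omega)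
    have hw'len : w'.length = w.length := List.length_map _
    have hrlen2 : (w'.drop t ++ w'.take t).length = w.length := by
      rw [List.length_append, List.length_take, List.length_drop]
      omega
    have hmemLp := blocks n m (w'.drop t ++ w'.take t) hm1
      (by rw [cnt_rotate]; exact hcw') (by omega)
      (by intro s hs1 hs2; exact hpre s hs1 (by omega))
    have hback : (w'.drop t ++ w'.take t).map (fun b => !b) = w.drop t ++ w.take t := by
      rw [List.map_append, hw', ← List.map_take, ← List.map_drop, map_not_invol, map_not_invol]
    have hmemLi : (w.drop t ++ w.take t) ∈
        (({[false]} : Language Bool) * KStar.kstar (SW (n/2))) ^ m := by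
      rw [← hback]
      exact lp_pow_map_not m _ hmemLp
    obtain ⟨hda, hpa, hwa⟩ := rotc t (by omega)
    exact contra _ _ m _ HI hm1 (by rw [hwa]; exact hmemLi) hda (by rw [hpa]; exact hpos)
  · -- balanced : use HP with an added self-loop
    obtain ⟨rho, hrho⟩ : ∃ r : ℝ, P j j = (r : EReal) :=
      ⟨(P j j).toReal, (EReal.coe_toReal (hP j j) (hPd j)).symm⟩
    obtain ⟨m', hm'⟩ := exists_nat_gt ((-rho)/om)
    have hm'om : -rho < m' * om := by
      rw [div_lt_iff₀ hom0] at hm'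
      linarith
    have hdstar : dst j ((true, j) :: wrep l m') = j := by
      show dst j (wrep l m') = j
      exact dst_wrep l j hd m'
    have hpwr : pw f j (wrep l m') = ((m' * om : ℝ) : EReal) := pw_wrep f l j hd om hom m'
    have hpwstar : pw f j ((true, j) :: wrep l m') = ((rho + m' * om : ℝ) : EReal) := by
      show f true j j + pw f j (wrep l m') = _
      have hft : f true j j = P j j := by simp [hf, mu2]
      rw [hft, hrho, hpwr, ← EReal.coe_add]
    have hposstar : 0 < pw f j ((true, j) :: wrep l m') := by
      rw [hpwstar]
      have : (0:ℝ) < rho + m' * om := by linarith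
      exact_mod_cast this
    have hword : ((true, j) :: wrep l m').map Prod.fst = true :: wrep w m' := by
      show true :: (wrep l m').map Prod.fst = _
      rw [map_fst_wrep]
    have hmem : ((true, j) :: wrep l m').map Prod.fst ∈
        (({[true]} : Language Bool) * KStar.kstar (SW (n/2))) ^ 1 := by
      rw [pow_one, hword]
      have hkw : wrep w m' ∈ KStar.kstar (SW (n/2)) :=
        wrep_mem_kstar (balanced_mem_kstar hzero (by omega)) m'
      exact Language.append_mem_mul
        (show [true] ∈ ({[true]} : Language Bool) from rfl) hkw
    exact contra j _ 1 _ HP le_rfl hmem hdstar hposstar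
  · -- more p's than i's : use HP
    set m := (cnt w).toNat with hm
    have hm1 : 1 ≤ m := by omega
    obtain ⟨t, htl, hpre⟩ := rot_pos (w := w) (by omega)
    have hrlen2 : (w.drop t ++ w.take t).length = w.length := by
      rw [List.length_append, List.length_take, List.length_drop]
      omega
    have hmemLp := blocks n m (w.drop t ++ w.take t) hm1
      (by rw [cnt_rotate]; omega) (by omega)
      (by intro s hs1 hs2; exact hpre s hs1 (by omega))
    obtain ⟨hda, hpa, hwa⟩ := rotc t (by omega)
    exact contra _ _ m _ HP hm1 (by rw [hwa]; exact hmemLp) hda (by rw [hpa]; exact hpos)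

end Aux

/-- with `S = S({p}, {i}, ⌊n/2⌋)`,
`G(P ⊕ I) ∈ Γ ↔ (G(μ({p}·S^*)) ∈ Γ ∧ G(μ({i}·S^*)) ∈ Γ)`. -/
theorem stmt16 {n : ℕ} (P I : MPMat n)
    (hP : ∀ i j, P i j ≠ ⊤) (hI : ∀ i j, I i j ≠ ⊤)
    (hPd : ∀ j, P j j ≠ ⊥) :
    InGamma (mpAdd P I) ↔
      (InGamma (langMat (mu2 P I)
        (({[true]} : Language Bool) *
          KStar.kstar (SL ({[true]} : Language Bool) ({[false]} : Language Bool) (n / 2)))) ∧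
       InGamma (langMat (mu2 P I)
        (({[false]} : Language Bool) *
          KStar.kstar (SL ({[true]} : Language Bool) ({[false]} : Language Bool) (n / 2))))) := by
  constructor
  · intro h
    constructor
    · refine forward_gamma P I h _ ?_
      intro u hu
      obtain ⟨a, ha, b, hb, rfl⟩ := Language.mem_mul.1 hu
      have ha' : a = [true] := ha
      subst ha'
      simp
    · refine forward_gamma P I h _ ?_
      intro u hu
      obtain ⟨a, ha, b, hb, rfl⟩ := Language.mem_mul.1 hu
      have ha' : a = [false] := ha
      subst ha'
      simp
  · rintro ⟨HP, HI⟩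
    intro i k hk
    by_contra hcon
    rw [not_le] at hcon
    rcases mpPow_attained P I k i i with hbot | ⟨l, hlen, hdst, hle⟩
    · rw [hbot] at hcon
      exact absurd bot_le (not_le.2 hcon)
    · have hpos : 0 < pw (mu2 P I) i l := lt_of_lt_of_le hcon hle
      exact no_pos_circuit (mu2 P I) (short_circuit P I hP hI hPd HP HI) k l i hlen hk hdst
        hpos


end NCP
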